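/- Let Q : ℝ^d → ℝ be a nonzero polynomial of total degree exactly j ≥ 1. Then there exist a unit vector u ∈ ℝ^d (|u| = 1) and a constant c ≠ 0 such that for every x ∈ ℝ^d the j-th derivative of the single-variable function ρ ↦ Q(x + ρu), evaluated at ρ = 0, equals c; that is, the j-th directional derivative D_u^j Q is the nonzero constant function c. -/

import Mathlib

open Polynomial MvPolynomial Finset in
private lemma coeff_prod_var {ι : Type*} (s : Finset ι) (p : ι → Polynomial ℝ) (n : ι → ℕ)
    (h : ∀ i ∈ s, (p i).natDegree ≤ n i) :
    (∏ i ∈ s, p i).coeff (∑ i ∈ s, n i) = ∏ i ∈ s, (p i).coeff (n i) := by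
  induction s using Finset.cons_induction with
  | empty => simp
  | cons a s ha ih =>
    rw [Finset.prod_cons, Finset.sum_cons, Finset.prod_cons,
      Polynomial.coeff_mul_add_eq_of_natDegree_le (h a (Finset.mem_cons_self a s))
        ((Polynomial.natDegree_prod_le s p).trans
          (Finset.sum_le_sum fun i hi => h i (Finset.mem_cons_of_mem hi))),
      ih fun i hi => h i (Finset.mem_cons_of_mem hi)]

private lemma iteratedDeriv_polyeval (n : ℕ) (P : Polynomial ℝ) :
    iteratedDeriv n (fun ρ : ℝ => P.eval ρ) = fun ρ => (Polynomial.derivative^[n] P).eval ρ := by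
  induction n generalizing P with
  | zero => simp
  | succ n ih =>
    rw [iteratedDeriv_succ']
    have : deriv (fun ρ : ℝ => P.eval ρ) = fun ρ : ℝ => (Polynomial.derivative P).eval ρ := by
      funext ρ; exact Polynomial.deriv (𝕜 := ℝ) (p := P) (x := ρ)
    rw [this, ih, Function.iterate_succ_apply]

private lemma coeff_lin_pow (a b : ℝ) (n : ℕ) :
    ((Polynomial.C a + Polynomial.C b * Polynomial.X) ^ n).coeff n = b ^ n := by
  have h := Polynomial.coeff_prod_of_natDegree_le (s := Finset.range n)
    (f := fun _ => Polynomial.C a + Polynomial.C b * Polynomial.X) 1 ?_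
  · simpa using h
  · intro p _
    exact (Polynomial.natDegree_add_le _ _).trans (by
      simp [Polynomial.natDegree_C_mul_le _ _ |>.trans Polynomial.natDegree_X_le])

private lemma natDegree_lin_pow_le (a b : ℝ) (n : ℕ) :
    ((Polynomial.C a + Polynomial.C b * Polynomial.X) ^ n).natDegree ≤ n := by
  refine (Polynomial.natDegree_pow_le).trans ?_
  have h1 : (Polynomial.C a + Polynomial.C b * Polynomial.X).natDegree ≤ 1 :=
    (Polynomial.natDegree_add_le _ _).trans (by
      simp [Polynomial.natDegree_C_mul_le _ _ |>.trans Polynomial.natDegree_X_le])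
  calc n * (Polynomial.C a + Polynomial.C b * Polynomial.X).natDegree
      ≤ n * 1 := Nat.mul_le_mul_left _ h1
    _ = n := Nat.mul_one n

/-- Scaling for a polynomial all of whose monomials have degree `j`. -/
private lemma eval_smul_of_deg (dd j : ℕ) (p : MvPolynomial (Fin dd) ℝ)
    (hp : ∀ m : Fin dd →₀ ℕ, MvPolynomial.coeff m p ≠ 0 → m.degree = j)
    (t : ℝ) (v : Fin dd → ℝ) :
    MvPolynomial.eval (fun i => t * v i) p = t ^ j * MvPolynomial.eval v p := by
  rw [MvPolynomial.eval_eq, MvPolynomial.eval_eq, Finset.mul_sum]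
  refine Finset.sum_congr rfl fun m hm => ?_
  have hdeg : ∑ i ∈ m.support, m i = j := by
    simpa [Finsupp.degree_apply] using hp m (MvPolynomial.mem_support_iff.mp hm)
  simp_rw [mul_pow]
  rw [Finset.prod_mul_distrib, Finset.prod_pow_eq_pow_sum, hdeg]
  ring

/-- For a nonzero polynomial `Q` on `ℝ^d` of total degree exactly `j ≥ 1`, there is a unit
direction `u` such that the `j`-th directional derivative `D_u^j Q` is a nonzero constant. -/
theorem directional_derivative_constant
    (d j : ℕ) (hj : 1 ≤ j) (Q : MvPolynomial (Fin d) ℝ)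
    (hQ : Q ≠ 0) (hdeg : Q.totalDegree = j) :
    ∃ (u : Fin d → ℝ) (c : ℝ), (∑ i, u i ^ 2 = 1) ∧ c ≠ 0 ∧
      ∀ x : Fin d → ℝ,
        iteratedDeriv j (fun ρ : ℝ => MvPolynomial.eval (fun i => x i + ρ * u i) Q) 0 = c := by
  classical
  set p := MvPolynomial.homogeneousComponent j Q with hp_def
  have hp_coeff : ∀ m : Fin d →₀ ℕ, MvPolynomial.coeff m p ≠ 0 → m.degree = j := by
    intro m hm
    by_contra h
    rw [hp_def, MvPolynomial.coeff_homogeneousComponent, if_neg h] at hm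
    exact hm rfl
  -- p ≠ 0
  have hp_ne : p ≠ 0 := by
    obtain ⟨m, hm, hmd⟩ : ∃ m ∈ Q.support, (m.sum fun _ e => e) = Q.totalDegree := by
      have : Q.support.Nonempty := MvPolynomial.support_nonempty.mpr hQ
      obtain ⟨m, hm, hmd⟩ := Finset.exists_mem_eq_sup Q.support this (fun m => m.sum fun _ e => e)
      exact ⟨m, hm, hmd.symm⟩
    intro h0
    have : MvPolynomial.coeff m p = MvPolynomial.coeff m Q := by
      rw [hp_def, MvPolynomial.coeff_homogeneousComponent, if_pos]
      simpa [Finsupp.degree_apply, Finsupp.sum, hdeg] using hmd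
    rw [h0] at this
    exact MvPolynomial.mem_support_iff.mp hm this.symm
  -- a point where p doesn't vanish
  obtain ⟨v, hv⟩ : ∃ v : Fin d → ℝ, MvPolynomial.eval v p ≠ 0 := by
    by_contra h
    push_neg at h
    exact hp_ne (MvPolynomial.funext fun x => by simpa using h x)
  have hv0 : v ≠ 0 := by
    intro h
    apply hv
    have h2 := eval_smul_of_deg d j p hp_coeff 0 v
    have hv' : (fun i => (0:ℝ) * v i) = v := by funext i; rw [h]; simp
    rw [hv'] at h2
    rw [h2, zero_pow (by omega), zero_mul]
  set r : ℝ := Real.sqrt (∑ i, v i ^ 2) with hr_def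
  have hsum_pos : 0 < ∑ i, v i ^ 2 := by
    rcases Function.ne_iff.mp hv0 with ⟨i, hi⟩
    have : 0 < v i ^ 2 := (sq_nonneg (v i)).lt_of_ne (Ne.symm (pow_ne_zero 2 hi))
    exact this.trans_le (Finset.single_le_sum (f := fun i => v i ^ 2)
      (fun i _ => sq_nonneg _) (Finset.mem_univ i))
  have hr_pos : 0 < r := Real.sqrt_pos.mpr hsum_pos
  set u : Fin d → ℝ := fun i => r⁻¹ * v i with hu_def
  have hunit : ∑ i, u i ^ 2 = 1 := by
    simp only [hu_def, mul_pow]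
    rw [← Finset.mul_sum, hr_def]
    rw [inv_pow, Real.sq_sqrt hsum_pos.le]
    exact inv_mul_cancel₀ hsum_pos.ne'
  have heval_u : MvPolynomial.eval u p ≠ 0 := by
    rw [hu_def, eval_smul_of_deg d j p hp_coeff r⁻¹ v]
    exact mul_ne_zero (pow_ne_zero _ (inv_ne_zero hr_pos.ne')) hv
  refine ⟨u, (Nat.factorial j : ℝ) * MvPolynomial.eval u p, hunit,
    mul_ne_zero (Nat.cast_ne_zero.mpr (Nat.factorial_ne_zero j)) heval_u, fun x => ?_⟩
  -- the single-variable polynomial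
  set P : Polynomial ℝ := MvPolynomial.eval₂ Polynomial.C
    (fun i => Polynomial.C (x i) + Polynomial.C (u i) * Polynomial.X) Q with hP_def
  have hfun : (fun ρ : ℝ => MvPolynomial.eval (fun i => x i + ρ * u i) Q)
      = fun ρ : ℝ => P.eval ρ := by
    funext ρ
    have h1 : Polynomial.evalRingHom ρ (MvPolynomial.eval₂ Polynomial.C
        (fun i => Polynomial.C (x i) + Polynomial.C (u i) * Polynomial.X) Q)
        = MvPolynomial.eval₂ ((Polynomial.evalRingHom ρ).comp Polynomial.C)
          ((Polynomial.evalRingHom ρ) ∘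
            fun i => Polynomial.C (x i) + Polynomial.C (u i) * Polynomial.X) Q :=
      MvPolynomial.eval₂_comp_left _ _ _ _
    have h2 : ((Polynomial.evalRingHom ρ).comp Polynomial.C) = RingHom.id ℝ := by
      ext a; simp
    have h3 : ((Polynomial.evalRingHom ρ)) ∘
        (fun i => Polynomial.C (x i) + Polynomial.C (u i) * Polynomial.X)
        = fun i => x i + ρ * u i := by
      funext i
      simp only [Function.comp_apply, Polynomial.coe_evalRingHom, Polynomial.eval_add,
        Polynomial.eval_mul, Polynomial.eval_C, Polynomial.eval_X]
      ring
    rw [h2, h3] at h1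
    show MvPolynomial.eval₂ (RingHom.id ℝ) (fun i => x i + ρ * u i) Q = P.eval ρ
    rw [← h1, hP_def]
    rfl
  -- coefficient computation
  have hsubset : p.support ⊆ Q.support := by
    intro m hm
    rw [MvPolynomial.mem_support_iff] at hm ⊢
    intro h
    apply hm
    rw [hp_def, MvPolynomial.coeff_homogeneousComponent]
    split <;> simp [h]
  have hcoeff : P.coeff j = MvPolynomial.eval u p := by
    have hRHS : MvPolynomial.eval u p
        = ∑ m ∈ Q.support, MvPolynomial.coeff m p * ∏ i ∈ m.support, u i ^ m i := by
      rw [MvPolynomial.eval_eq]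
      exact Finset.sum_subset hsubset (fun m _ hmn => by
        rw [MvPolynomial.mem_support_iff, not_not] at hmn
        rw [hmn, zero_mul])
    rw [hP_def, MvPolynomial.eval₂_eq, Polynomial.finset_sum_coeff, hRHS]
    refine Finset.sum_congr rfl fun m hm => ?_
    rw [Polynomial.coeff_C_mul]
    by_cases hmj : m.degree = j
    · have hsum : ∑ i ∈ m.support, m i = j := by simpa [Finsupp.degree_apply] using hmj
      have hcp : (∏ i ∈ m.support,
          (Polynomial.C (x i) + Polynomial.C (u i) * Polynomial.X) ^ m i).coeff j
          = ∏ i ∈ m.support, u i ^ m i := by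
        rw [← hsum, coeff_prod_var m.support _ (fun i => m i)
          (fun i _ => natDegree_lin_pow_le (x i) (u i) (m i))]
        exact Finset.prod_congr rfl fun i _ => coeff_lin_pow (x i) (u i) (m i)
      rw [hcp, hp_def, MvPolynomial.coeff_homogeneousComponent, if_pos hmj]
    · have hmlt : m.degree < j := by
        have hle : m.degree ≤ j := by
          have := MvPolynomial.le_totalDegree hm
          simpa [Finsupp.degree_apply, Finsupp.sum, hdeg] using this
        omega
      have hnd : (∏ i ∈ m.support,
          (Polynomial.C (x i) + Polynomial.C (u i) * Polynomial.X) ^ m i).natDegree < j := by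
        refine lt_of_le_of_lt ((Polynomial.natDegree_prod_le _ _).trans
          (Finset.sum_le_sum fun i _ => natDegree_lin_pow_le (x i) (u i) (m i))) ?_
        simpa [Finsupp.degree_apply] using hmlt
      rw [Polynomial.coeff_eq_zero_of_natDegree_lt hnd, mul_zero,
        hp_def, MvPolynomial.coeff_homogeneousComponent, if_neg hmj, zero_mul]
  rw [hfun, iteratedDeriv_polyeval]
  show Polynomial.eval 0 ((⇑Polynomial.derivative)^[j] P) = _
  rw [← Polynomial.coeff_zero_eq_eval_zero, Polynomial.coeff_iterate_derivative,
    zero_add, Nat.descFactorial_self, hcoeff, nsmul_eq_mul]
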